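/- For every k ∈ ℕ, every x ∈ X and every y ∈ Y: f(x̂_k, y) − f(x, ŷ_k) ≤ (1/(k+1)) ∑_{i=0}^{k} (1/(2σ_i))(‖y − y^i‖² − ‖y − y^{i+1}‖² − ‖y^i − y^{i+1}‖²) + (1/(k+1)) ∑_{i=0}^{k} (1/(2τ_i))(‖x − x^i‖² − ‖x − x^{i+1}‖² − ‖x^i − x^{i+1}‖²) + (1/(k+1)) ∑_{i=0}^{k} ( f(x^{i+1}, y) − f(x̄^i, y) + f(x̄^i, y^{i+1}) − f(x, y^{i+1}) − f(x^{i+1}, ȳ^{i+1}) + f(x, ȳ^{i+1}) ). -/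
import Mathlib


open RealInnerProductSpace

/-- Lemma 3.6(iii): ergodic gap inequality for the alternating proximity mapping iterates. -/
theorem stmt_5
    {H₁ : Type*} [NormedAddCommGroup H₁] [InnerProductSpace ℝ H₁] [CompleteSpace H₁]
    {H₂ : Type*} [NormedAddCommGroup H₂] [InnerProductSpace ℝ H₂] [CompleteSpace H₂]
    (X : Set H₁) (Y : Set H₂)
    (hXne : X.Nonempty) (hXcl : IsClosed X) (hXcv : Convex ℝ X)
    (hYne : Y.Nonempty) (hYcl : IsClosed Y) (hYcv : Convex ℝ Y)
    (f : H₁ → H₂ → ℝ)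
    (hfcvx : ∀ y ∈ Y, ConvexOn ℝ X (fun x => f x y))
    (hfccv : ∀ x ∈ X, ConcaveOn ℝ Y (fun y => f x y))
    (xs : ℕ → H₁) (ys : ℕ → H₂) (hxX : ∀ k, xs k ∈ X) (hyY : ∀ k, ys k ∈ Y)
    (xbs : ℕ → H₁) (ybs : ℕ → H₂)
    (τs σs : ℕ → ℝ) (hτ : ∀ k, 0 < τs k) (hσ : ∀ k, 0 < σs k)
    (hA : ∀ k, ∀ y ∈ Y,
      (1/(2*σs k)) * (‖ys k - ys (k+1)‖^2 + ‖y - ys (k+1)‖^2 - ‖y - ys k‖^2)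
        + f (xbs k) y - f (xbs k) (ys (k+1)) ≤ 0)
    (hB : ∀ k, ∀ x ∈ X,
      (1/(2*τs k)) * (‖xs k - xs (k+1)‖^2 + ‖x - xs (k+1)‖^2 - ‖x - xs k‖^2)
        + f (xs (k+1)) (ybs (k+1)) - f x (ybs (k+1)) ≤ 0)
    (k : ℕ) (x : H₁) (hx : x ∈ X) (y : H₂) (hy : y ∈ Y) :
    f ((((k : ℝ)+1)⁻¹) • ∑ i ∈ Finset.range (k+1), xs (i+1)) y
      - f x ((((k : ℝ)+1)⁻¹) • ∑ i ∈ Finset.range (k+1), ys (i+1))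
    ≤ (((k : ℝ)+1)⁻¹) * ∑ i ∈ Finset.range (k+1),
        (1/(2*σs i)) * (‖y - ys i‖^2 - ‖y - ys (i+1)‖^2 - ‖ys i - ys (i+1)‖^2)
      + (((k : ℝ)+1)⁻¹) * ∑ i ∈ Finset.range (k+1),
        (1/(2*τs i)) * (‖x - xs i‖^2 - ‖x - xs (i+1)‖^2 - ‖xs i - xs (i+1)‖^2)
      + (((k : ℝ)+1)⁻¹) * ∑ i ∈ Finset.range (k+1),
        (f (xs (i+1)) y - f (xbs i) y + f (xbs i) (ys (i+1)) - f x (ys (i+1))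
          - f (xs (i+1)) (ybs (i+1)) + f x (ybs (i+1))) := by
  set c : ℝ := ((k : ℝ)+1)⁻¹ with hc_def
  have hcpos : (0:ℝ) < (k:ℝ) + 1 := by positivity
  have hc0 : 0 ≤ c := by positivity
  have hw1 : ∑ _i ∈ Finset.range (k+1), c = 1 := by
    rw [Finset.sum_const, Finset.card_range, nsmul_eq_mul, hc_def]
    push_cast
    field_simp
  have hsmul₁ : c • ∑ i ∈ Finset.range (k+1), xs (i+1)
      = ∑ i ∈ Finset.range (k+1), c • xs (i+1) := Finset.smul_sum
  have hsmul₂ : c • ∑ i ∈ Finset.range (k+1), ys (i+1)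
      = ∑ i ∈ Finset.range (k+1), c • ys (i+1) := Finset.smul_sum
  have h1 : f (c • ∑ i ∈ Finset.range (k+1), xs (i+1)) y
      ≤ ∑ i ∈ Finset.range (k+1), c * f (xs (i+1)) y := by
    rw [hsmul₁]
    exact (hfcvx y hy).map_sum_le (fun i _ => hc0) hw1 (fun i _ => hxX (i+1))
  have h2 : ∑ i ∈ Finset.range (k+1), c * f x (ys (i+1))
      ≤ f x (c • ∑ i ∈ Finset.range (k+1), ys (i+1)) := by
    rw [hsmul₂]
    exact (hfccv x hx).le_map_sum (fun i _ => hc0) hw1 (fun i _ => hyY (i+1))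
  have h3 : ∑ i ∈ Finset.range (k+1), (f (xs (i+1)) y - f x (ys (i+1)))
      ≤ ∑ i ∈ Finset.range (k+1),
          ((1/(2*σs i)) * (‖y - ys i‖^2 - ‖y - ys (i+1)‖^2 - ‖ys i - ys (i+1)‖^2)
          + (1/(2*τs i)) * (‖x - xs i‖^2 - ‖x - xs (i+1)‖^2 - ‖xs i - xs (i+1)‖^2)
          + (f (xs (i+1)) y - f (xbs i) y + f (xbs i) (ys (i+1)) - f x (ys (i+1))
            - f (xs (i+1)) (ybs (i+1)) + f x (ybs (i+1)))) := by
    apply Finset.sum_le_sum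
    intro i _
    have hAi := hA i y hy
    have hBi := hB i x hx
    linarith [hAi, hBi]
  have key : ∑ i ∈ Finset.range (k+1), c * f (xs (i+1)) y
      - ∑ i ∈ Finset.range (k+1), c * f x (ys (i+1))
      ≤ c * ∑ i ∈ Finset.range (k+1),
          (1/(2*σs i)) * (‖y - ys i‖^2 - ‖y - ys (i+1)‖^2 - ‖ys i - ys (i+1)‖^2)
        + c * ∑ i ∈ Finset.range (k+1),
          (1/(2*τs i)) * (‖x - xs i‖^2 - ‖x - xs (i+1)‖^2 - ‖xs i - xs (i+1)‖^2)
        + c * ∑ i ∈ Finset.range (k+1),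
          (f (xs (i+1)) y - f (xbs i) y + f (xbs i) (ys (i+1)) - f x (ys (i+1))
            - f (xs (i+1)) (ybs (i+1)) + f x (ybs (i+1))) := by
    rw [← Finset.sum_sub_distrib, ← mul_add, ← mul_add, ← Finset.sum_add_distrib,
      ← Finset.sum_add_distrib]
    calc ∑ i ∈ Finset.range (k+1), (c * f (xs (i+1)) y - c * f x (ys (i+1)))
        = c * ∑ i ∈ Finset.range (k+1), (f (xs (i+1)) y - f x (ys (i+1))) := by
          rw [Finset.mul_sum]; congr 1; ext i; ring
      _ ≤ _ := mul_le_mul_of_nonneg_left h3 hc0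
  linarith [h1, h2, key]
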